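/- arXiv:2505.24100 — 4 statements merged into one kernel-verified Lean document; each statement's English description precedes it below -/
import Mathlib

section
/- Let t ≥ 5 be an integer and let λ, m be such that λ − t(t−3)^m is even and (2t−6)(3t−10) ≤ λ − t(t−3)^m < t(t−3)^{m+1}. Then there exist nonnegative integers s₁, s₂ with (2t−6)s₁ + (3t−10)s₂ = λ − t(t−3)^m and 2(s₁+s₂) < t(t−3)^m. -/
theorem stmt_1 (t : ℤ) (ht : 5 ≤ t) (m : ℕ) (hm : 2 ≤ m) (lam : ℤ)
    (heven : Even (lam - t * (t - 3) ^ m))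
    (hlow : (2 * t - 6) * (3 * t - 10) ≤ lam - t * (t - 3) ^ m)
    (hhigh : lam - t * (t - 3) ^ m < t * (t - 3) ^ (m + 1)) :
    ∃ s₁ s₂ : ℕ, (2 * t - 6) * s₁ + (3 * t - 10) * s₂ = lam - t * (t - 3) ^ m ∧
      2 * ((s₁ : ℤ) + s₂) < t * (t - 3) ^ m := by
  obtain ⟨k, hk⟩ := heven
  set D := lam - t * (t - 3) ^ m with hD
  set M := t * (t - 3) ^ m with hM
  have hβ : (0:ℤ) < 3 * t - 10 := by linarith
  set β : ℤ := 3 * t - 10 with hβdef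
  set α : ℤ := t - 3 with hα
  set s₁ : ℤ := (3 * k) % β with hs₁
  set q : ℤ := (3 * k) / β with hq
  have hs₁0 : 0 ≤ s₁ := Int.emod_nonneg _ (ne_of_gt hβ)
  have hs₁lt : s₁ < β := Int.emod_lt_of_pos _ hβ
  have hs₁eq : s₁ = 3 * k - β * q := by rw [hs₁, hq, Int.emod_def]
  set u : ℤ := α * q - k with hu
  have hβu : β * u = k - α * s₁ := by
    rw [hu, hs₁eq, hα, hβdef]; ring
  have hkαβ : α * β ≤ k := by
    have : 2 * (α * β) ≤ 2 * k := by
      calc 2 * (α * β) = (2 * t - 6) * (3 * t - 10) := by rw [hα, hβdef]; ring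
        _ ≤ D := hlow
        _ = 2 * k := by rw [hk]; ring
    linarith
  have hαpos : (0:ℤ) < α := by rw [hα]; linarith
  have hu0 : 0 ≤ u := by
    nlinarith [mul_le_mul_of_nonneg_left (by linarith : s₁ ≤ β - 1) (le_of_lt hαpos)]
  have hMsq : t * (t - 3) ^ 2 ≤ M := by
    rw [hM]
    have h1 : (1:ℤ) ≤ t - 3 := by linarith
    have := pow_le_pow_right₀ h1 hm
    nlinarith
  have hDM : D < M * (t - 3) := by
    calc D < t * (t - 3) ^ (m + 1) := hhigh
      _ = M * (t - 3) := by rw [hM, pow_succ]; ring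
  -- key bound: β * (2 * s₁ + 4 * u) < β * M
  have hkey : β * (2 * s₁ + 4 * u) < β * M := by
    have h1 : β * (2 * s₁ + 4 * u) = 4 * k + 2 * s₁ * (t - 4) := by
      have : 4 * u * β = 4 * (k - α * s₁) := by rw [← hβu]; ring
      rw [hα, hβdef] at *; nlinarith [this]
    have h4k : 4 * k < 2 * M * (t - 3) := by
      have : D = 2 * k := by rw [hk]; ring
      linarith [hDM]
    have hMbig : 2 * (β - 1) ≤ M := by
      nlinarith [hMsq]
    have ht4 : (0:ℤ) ≤ t - 4 := by linarith
    have hs1 : 2 * s₁ * (t - 4) ≤ 2 * (β - 1) * (t - 4) :=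
      mul_le_mul_of_nonneg_right (by linarith) ht4
    have hM4 : 2 * (β - 1) * (t - 4) ≤ M * (t - 4) :=
      mul_le_mul_of_nonneg_right hMbig ht4
    have : 4 * k + 2 * s₁ * (t - 4) < 2 * M * (t - 3) + M * (t - 4) := by
      linarith
    calc β * (2 * s₁ + 4 * u) = 4 * k + 2 * s₁ * (t - 4) := h1
      _ < 2 * M * (t - 3) + M * (t - 4) := this
      _ = β * M := by rw [hβdef]; ring
  have hbound : 2 * (s₁ + 2 * u) < M := by
    have := lt_of_mul_lt_mul_left hkey (le_of_lt hβ)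
    linarith
  refine ⟨s₁.toNat, (2 * u).toNat, ?_, ?_⟩
  · have h1 : (s₁.toNat : ℤ) = s₁ := Int.toNat_of_nonneg hs₁0
    have h2 : ((2 * u).toNat : ℤ) = 2 * u := Int.toNat_of_nonneg (by linarith)
    rw [h1, h2]
    have hD2 : D = 2 * k := by rw [hk]; ring
    have e : (2 * t - 6) * s₁ = 2 * (α * s₁) := by rw [hα]; ring
    have e2 : β * (2 * u) = 2 * (β * u) := by ring
    linarith [hβu, e, e2, hD2]
  · have h1 : (s₁.toNat : ℤ) = s₁ := Int.toNat_of_nonneg hs₁0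
    have h2 : ((2 * u).toNat : ℤ) = 2 * u := Int.toNat_of_nonneg (by linarith)
    rw [h1, h2]
    linarith [hbound]
end

section
/- Let T be a tree and let L, L′ be two paths in T whose union is T and which share at least one vertex. Let Q be the (unique) path in T between the first and last vertex of L that lie on L′ (traversing L). Then Q is a common subpath of both L and L′, and V(L)∖V(Q) and V(L′)∖V(Q) are anticomplete in T. -/
open SimpleGraph

private lemma tree_path_unique {V : Type*} {G : SimpleGraph V} (h : G.IsTree) {x y : V}
    (p q : G.Walk x y) (hp : p.IsPath) (hq : q.IsPath) : p = q := by
  obtain ⟨-, hu⟩ := isTree_iff_existsUnique_path.mp h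
  obtain ⟨r, -, hr⟩ := hu x y
  rw [hr p hp, hr q hq]

private lemma seg_exists {V : Type*} [DecidableEq V] {G : SimpleGraph V} {a b x y : V}
    (p : G.Walk a b) (hp : p.IsPath) (hx : x ∈ p.support) (hy : y ∈ p.support) :
    ∃ q : G.Walk x y, q.IsPath ∧ (∀ z ∈ q.support, z ∈ p.support) ∧
      (∀ e ∈ q.edges, e ∈ p.edges) := by
  rcases (Walk.mem_support_append_iff _ _).mp (by rwa [p.take_spec hx]) with h | h
  · have hq := (hp.takeUntil hx).dropUntil h
    refine ⟨((p.takeUntil x hx).dropUntil y h).reverse, hq.reverse, ?_, ?_⟩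
    · intro z hz
      rw [Walk.support_reverse, List.mem_reverse] at hz
      exact p.support_takeUntil_subset hx (Walk.support_dropUntil_subset _ h hz)
    · intro e he
      rw [Walk.edges_reverse, List.mem_reverse] at he
      exact p.edges_takeUntil_subset hx (Walk.edges_dropUntil_subset _ h he)
  · have hq := (hp.dropUntil hx).takeUntil h
    refine ⟨(p.dropUntil x hx).takeUntil y h, hq, ?_, ?_⟩
    · intro z hz
      exact p.support_dropUntil_subset hx (Walk.support_takeUntil_subset _ h hz)
    · intro e he
      exact p.edges_dropUntil_subset hx (Walk.edges_takeUntil_subset _ h he)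

private lemma list_min_exists {α : Type*} (r : α → α → Prop)
    (htr : ∀ x y z, r x y → r y z → r x z) :
    ∀ (l : List α), l ≠ [] → (∀ x ∈ l, ∀ y ∈ l, r x y ∨ r y x) →
      ∃ u ∈ l, ∀ x ∈ l, r u x := by
  intro l
  induction l with
  | nil => intro h; exact absurd rfl h
  | cons a l ih =>
    intro _ htot
    rcases eq_or_ne l [] with rfl | hne
    · refine ⟨a, List.mem_singleton_self a, ?_⟩
      intro x hx
      rw [List.mem_singleton] at hx
      subst hx
      exact (htot x (List.mem_singleton_self x) x (List.mem_singleton_self x)).elim id id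
    · obtain ⟨u, hu, hmin⟩ := ih hne (fun x hx y hy =>
        htot x (List.mem_cons_of_mem _ hx) y (List.mem_cons_of_mem _ hy))
      rcases htot a (List.mem_cons_self) u (List.mem_cons_of_mem _ hu) with h | h
      · refine ⟨a, List.mem_cons_self, ?_⟩
        intro x hx
        rcases List.mem_cons.mp hx with rfl | hx
        · rcases htot x (List.mem_cons_self) x (List.mem_cons_self) with h' | h' <;>
            exact h'
        · exact htr _ _ _ h (hmin x hx)
      · refine ⟨u, List.mem_cons_of_mem _ hu, ?_⟩
        intro x hx
        rcases List.mem_cons.mp hx with rfl | hx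
        · exact h
        · exact hmin x hx

theorem stmt_11 {V : Type*} [Fintype V] (T : SimpleGraph V)
    (htree : T.IsTree)
    {a b a' b' : V} (L : T.Walk a b) (L' : T.Walk a' b')
    (hL : L.IsPath) (hL' : L'.IsPath)
    (hV : ∀ v : V, v ∈ L.support ∨ v ∈ L'.support)
    (hE : ∀ e ∈ T.edgeSet, e ∈ L.edges ∨ e ∈ L'.edges)
    (hmeet : ∃ v : V, v ∈ L.support ∧ v ∈ L'.support) :
    ∃ (u v : V) (Q : T.Walk u v), Q.IsPath ∧
      (∀ w : V, w ∈ Q.support ↔ w ∈ L.support ∧ w ∈ L'.support) ∧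
      (∀ e ∈ Q.edges, e ∈ L.edges ∧ e ∈ L'.edges) ∧
      (∀ x y : V, x ∈ L.support → x ∉ Q.support → y ∈ L'.support → y ∉ Q.support →
        x ≠ y ∧ ¬ T.Adj x y) := by
  classical
  -- the order relation along L
  let r : V → V → Prop := fun x y => ∃ hx : x ∈ L.support, y ∈ (L.dropUntil x hx).support
  -- dropping twice equals dropping once (by uniqueness of paths in a tree)
  have hdd : ∀ (x y : V) (hx : x ∈ L.support) (hy : y ∈ (L.dropUntil x hx).support),
      (L.dropUntil x hx).dropUntil y hy = L.dropUntil y (L.support_dropUntil_subset hx hy) :=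
    fun x y hx hy => tree_path_unique htree _ _ ((hL.dropUntil hx).dropUntil hy)
      (hL.dropUntil (L.support_dropUntil_subset hx hy))
  have hrmem : ∀ x y, r x y → x ∈ L.support ∧ y ∈ L.support := by
    rintro x y ⟨hx, hy⟩
    exact ⟨hx, L.support_dropUntil_subset hx hy⟩
  have hdrop_eq : ∀ (x : V) (hx hx' : x ∈ L.support), L.dropUntil x hx = L.dropUntil x hx' :=
    fun x hx hx' => rfl
  have htrans : ∀ x y z, r x y → r y z → r x z := by
    rintro x y z ⟨hx, hy⟩ ⟨hy', hz⟩
    refine ⟨hx, ?_⟩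
    have h1 : z ∈ ((L.dropUntil x hx).dropUntil y hy).support := by
      rw [hdd x y hx hy]; exact hz
    exact Walk.support_dropUntil_subset _ _ h1
  have htot : ∀ x y, x ∈ L.support → y ∈ L.support → r x y ∨ r y x := by
    intro x y hx hy
    rcases (Walk.mem_support_append_iff _ _).mp (by rw [L.take_spec hx]; exact hy) with h | h
    · -- y lies in takeUntil x; show r y x
      right
      refine ⟨hy, ?_⟩
      set t := L.takeUntil x hx with ht
      have hsplit : L = (t.takeUntil y h).append ((t.dropUntil y h).append (L.dropUntil x hx)) := by
        rw [Walk.append_assoc, t.take_spec h, ht, L.take_spec hx]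
      have hpath2 : ((t.dropUntil y h).append (L.dropUntil x hx)).IsPath := by
        apply Walk.IsPath.of_append_right (p := t.takeUntil y h)
        rw [← hsplit]; exact hL
      have := tree_path_unique htree _ _ hpath2 (hL.dropUntil hy)
      rw [← this, Walk.mem_support_append_iff]
      exact Or.inl (Walk.end_mem_support _)
    · exact Or.inl ⟨hx, h⟩
  have hantisymm : ∀ x y, r x y → r y x → x = y := by
    rintro x y ⟨hx, hy⟩ ⟨hy', hx'⟩
    by_contra hne
    set d := L.dropUntil x hx with hd
    have hnodup : d.support.Nodup := (hL.dropUntil hx).support_nodup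
    have hsplit : d.support = (d.takeUntil y hy).support ++ (d.dropUntil y hy).support.tail := by
      conv_lhs => rw [← d.take_spec hy]
      exact Walk.support_append _ _
    have hx1 : x ∈ (d.takeUntil y hy).support := Walk.start_mem_support _
    have hx2 : x ∈ (d.dropUntil y hy).support := by
      rw [hdd x y hx hy]; exact hx'
    have hx3 : x ∈ (d.dropUntil y hy).support.tail := by
      rcases List.mem_cons.mp ((d.dropUntil y hy).support_eq_cons ▸ hx2) with h | h
      · exact absurd h hne
      · exact h
    rw [hsplit] at hnodup
    exact (List.disjoint_of_nodup_append hnodup) hx1 hx3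
  -- the list of common vertices, in the order of L
  obtain ⟨w₀, hw₀L, hw₀L'⟩ := hmeet
  set Sl : List V := L.support.filter (fun v => decide (v ∈ L'.support)) with hSl
  have hSl_mem : ∀ x, x ∈ Sl ↔ x ∈ L.support ∧ x ∈ L'.support := by
    intro x
    simp [hSl, List.mem_filter]
  have hSl_ne : Sl ≠ [] := by
    intro h
    have := (hSl_mem w₀).mpr ⟨hw₀L, hw₀L'⟩
    rw [h] at this
    exact List.not_mem_nil this
  have htotSl : ∀ x ∈ Sl, ∀ y ∈ Sl, r x y ∨ r y x := fun x hx y hy =>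
    htot x y ((hSl_mem x).mp hx).1 ((hSl_mem y).mp hy).1
  obtain ⟨u, huS, humin⟩ := list_min_exists r htrans Sl hSl_ne htotSl
  obtain ⟨v, hvS, hvmax⟩ := list_min_exists (flip r) (fun x y z h1 h2 => htrans z y x h2 h1)
    Sl hSl_ne (fun x hx y hy => (htotSl x hx y hy).symm)
  obtain ⟨huL, huL'⟩ := (hSl_mem u).mp huS
  obtain ⟨hvL, hvL'⟩ := (hSl_mem v).mp hvS
  have hruv : r u v := humin v hvS
  obtain ⟨hu', hv'⟩ := hruv
  -- the candidate path
  set Q : T.Walk u v := (L.dropUntil u hu').takeUntil v hv' with hQ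
  have hQpath : Q.IsPath := (hL.dropUntil hu').takeUntil hv'
  have hQsubL : ∀ z ∈ Q.support, z ∈ L.support := fun z hz =>
    L.support_dropUntil_subset hu' (Walk.support_takeUntil_subset _ hv' hz)
  have hQedgeL : ∀ e ∈ Q.edges, e ∈ L.edges := fun e he =>
    L.edges_dropUntil_subset hu' (Walk.edges_takeUntil_subset _ hv' he)
  -- Q agrees with the segment of L' between u and v
  obtain ⟨q', hq'path, hq'sub, hq'edge⟩ := seg_exists L' hL' huL' hvL'
  have hq'Q : q' = Q := tree_path_unique htree _ _ hq'path hQpath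
  have hQsubL' : ∀ z ∈ Q.support, z ∈ L'.support := fun z hz => hq'sub z (hq'Q ▸ hz)
  have hQedgeL' : ∀ e ∈ Q.edges, e ∈ L'.edges := fun e he => hq'edge e (hq'Q ▸ he)
  -- every common vertex lies on Q
  have hSsubQ : ∀ w, w ∈ L.support → w ∈ L'.support → w ∈ Q.support := by
    intro w hwL hwL'
    have hwS : w ∈ Sl := (hSl_mem w).mpr ⟨hwL, hwL'⟩
    obtain ⟨hu'', hw1⟩ := humin w hwS
    have hw1' : w ∈ (L.dropUntil u hu').support := hw1
    have hrwv : r w v := hvmax w hwS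
    set d := L.dropUntil u hu' with hd
    have hsplit : d.support = (d.takeUntil v hv').support ++ (d.dropUntil v hv').support.tail := by
      conv_lhs => rw [← d.take_spec hv']
      exact Walk.support_append _ _
    rw [hsplit] at hw1'
    rcases List.mem_append.mp hw1' with h | h
    · exact h
    · -- w appears after v on L, so r v w; antisymmetry gives w = v
      exfalso
      have hw2 : w ∈ (d.dropUntil v hv').support := List.mem_of_mem_tail h
      rw [hdd u v hu' hv'] at hw2
      have hrvw : r v w := ⟨L.support_dropUntil_subset hu' hv', hw2⟩
      have : w = v := hantisymm w v hrwv hrvw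
      subst this
      -- then w ∈ tail of dropUntil w, contradicting nodup
      have hnodup : (d.dropUntil w hv').support.Nodup :=
        ((hL.dropUntil hu').dropUntil hv').support_nodup
      have := (d.dropUntil w hv').support_eq_cons
      rw [this] at hnodup
      exact (List.nodup_cons.mp hnodup).1 h
  refine ⟨u, v, Q, hQpath, ?_, ?_, ?_⟩
  · intro w
    exact ⟨fun hw => ⟨hQsubL w hw, hQsubL' w hw⟩, fun ⟨h1, h2⟩ => hSsubQ w h1 h2⟩
  · intro e he
    exact ⟨hQedgeL e he, hQedgeL' e he⟩
  · intro x y hxL hxQ hyL' hyQ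
    have hxL' : x ∉ L'.support := fun h => hxQ (hSsubQ x hxL h)
    have hyL : y ∉ L.support := fun h => hyQ (hSsubQ y h hyL')
    constructor
    · rintro rfl
      exact hxL' hyL'
    · intro hadj
      rcases hE s(x, y) hadj with h | h
      · exact hyL (Walk.snd_mem_support_of_mem_edges L h)
      · exact hxL' (Walk.fst_mem_support_of_mem_edges L' h)
end

section
/- For every integer t ≥ 5 and m ≥ 0, the graph T_m (defined recursively by gluing subdivided cycles) contains no induced cycle of length 2t − 2. -/
open SimpleGraph
open Fin.NatCast Fin.CommRing

/-- One-directional adjacency for the territory graph `T_m` (for a fixed `t ≥ 5`).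
Vertices are pairs `(j, a)` with `j ≤ m` a level and `a < t*(t-3)^j` a position on the
level-`j` cycle `B_j`; other pairs are isolated.  Level `j` is a cycle of length
`t*(t-3)^j` (so `B_j` is the `(t-4)`-subdivision of a `t*(t-3)^(j-1)`-cycle whose branch
vertices sit at the positions divisible by `t-3`), and the spoke edges join the `i`-th
vertex of `B_j` to the `i`-th branch vertex `(t-3)*i` of `B_(j+1)`. -/
def tadjAux (t m : ℕ) (u v : ℕ × ℕ) : Prop :=
  5 ≤ t ∧ v.1 ≤ m ∧
    ((u.1 = v.1 ∧ u.2 < t * (t - 3) ^ u.1 ∧ v.2 < t * (t - 3) ^ u.1 ∧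
        (u.2 + 1) % (t * (t - 3) ^ u.1) = v.2) ∨
     (v.1 = u.1 + 1 ∧ u.2 < t * (t - 3) ^ u.1 ∧ v.2 = (t - 3) * u.2))

/-- The territory graph `T_m`, built by recursively gluing subdivided cycles. -/
def Tgraph (t m : ℕ) : SimpleGraph (ℕ × ℕ) where
  Adj u v := u ≠ v ∧ (tadjAux t m u v ∨ tadjAux t m v u)
  symm := by
    constructor
    intro u v h
    exact ⟨Ne.symm h.1, h.2.symm⟩
  loopless := by
    constructor
    intro u h
    exact h.1 rfl


-- Fin cast helpers
lemma fin_cast_inj {n a b : ℕ} [NeZero n] (ha : a < n) (hb : b < n) (hab : (a : Fin n) = b) :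
    a = b := by
  have : a % n = b % n := by
    have := congrArg Fin.val hab
    simpa [Fin.val_natCast] using this
  simpa [Nat.mod_eq_of_lt ha, Nat.mod_eq_of_lt hb] using this

lemma fin_natCast_self {n : ℕ} [NeZero n] : ((n : ℕ) : Fin n) = 0 := by
  have : ((n : ℕ) : Fin n).val = 0 := by simp [Fin.val_natCast]
  exact Fin.ext this

lemma zmod_cast_inj {N a b : ℕ} (ha : a < N) (hb : b < N) (h : (a : ZMod N) = b) : a = b := by
  haveI : NeZero N := ⟨by omega⟩
  have := congrArg ZMod.val h
  rwa [ZMod.val_natCast_of_lt ha, ZMod.val_natCast_of_lt hb] at this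

lemma zmod_cast_ne_zero {N c : ℕ} (hc : 0 < c) (hcN : c < N) : (c : ZMod N) ≠ 0 := by
  intro h
  have := zmod_cast_inj hcN (by omega : 0 < N) (by simpa using h)
  omega

namespace Terr

variable {t m : ℕ}

/-- length of level-j cycle -/
def L (t j : ℕ) : ℕ := t * (t - 3) ^ j

lemma mymul_lt {c a b : ℕ} (hc : 0 < c) (h : a < b) : c * a < c * b :=
  (Nat.mul_lt_mul_left hc).mpr h

lemma L_ge (ht : 5 ≤ t) (j : ℕ) : t ≤ L t j := by
  have : 1 ≤ (t - 3) ^ j := Nat.one_le_pow _ _ (by omega)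
  calc t = t * 1 := by ring
  _ ≤ t * (t - 3) ^ j := Nat.mul_le_mul_left t this

lemma L_succ (t j : ℕ) : L t (j + 1) = (t - 3) * L t j := by
  simp [L, pow_succ]; ring

lemma valid_of_adj {u v : ℕ × ℕ} (h : (Tgraph t m).Adj u v) :
    u.1 ≤ m ∧ v.1 ≤ m ∧ u.2 < L t u.1 ∧ v.2 < L t v.1 := by
  rcases h with ⟨hne, h | h⟩ <;> rcases h with ⟨ht5, hm, h | h⟩
  · obtain ⟨h1, h2, h3, h4⟩ := h
    exact ⟨by omega, hm, h2, by rw [L, ← h1]; exact h3⟩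
  · obtain ⟨h1, h2, h3⟩ := h
    refine ⟨by omega, hm, h2, ?_⟩
    rw [h3, h1, L_succ]
    exact mymul_lt (by omega) h2
  · obtain ⟨h1, h2, h3, h4⟩ := h
    exact ⟨hm, by omega, by rw [L, ← h1]; exact h3, h2⟩
  · obtain ⟨h1, h2, h3⟩ := h
    refine ⟨hm, by omega, ?_, h2⟩
    rw [h3, h1, L_succ]
    exact mymul_lt (by omega) h2

lemma adj_cases {j a e b : ℕ} (h : (Tgraph t m).Adj (j, a) (e, b)) :
    (e = j ∧ ((a + 1) % L t j = b ∨ (b + 1) % L t j = a)) ∨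
    (e = j + 1 ∧ b = (t - 3) * a) ∨ (j = e + 1 ∧ a = (t - 3) * b) := by
  rcases h with ⟨hne, h | h⟩ <;> rcases h with ⟨ht5, hm, h | h⟩
  · exact Or.inl ⟨h.1.symm, Or.inl (by simpa [L] using h.2.2.2)⟩
  · exact Or.inr (Or.inl ⟨h.1, h.2.2⟩)
  · obtain ⟨h1, h2, h3, h4⟩ := h
    simp only at h1 h2 h3 h4
    subst h1
    exact Or.inl ⟨rfl, Or.inr (by simpa [L] using h4)⟩
  · exact Or.inr (Or.inr ⟨h.1, h.2.2⟩)

lemma adj_spoke {j a : ℕ} (ht : 5 ≤ t) (hj : j + 1 ≤ m) (ha : a < L t j) :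
    (Tgraph t m).Adj (j, a) (j + 1, (t - 3) * a) :=
  ⟨by simp, Or.inl ⟨ht, hj, Or.inr ⟨rfl, ha, rfl⟩⟩⟩

lemma adj_level {j a b : ℕ} (ht : 5 ≤ t) (hj : j ≤ m) (ha : a < L t j) (hb : b < L t j)
    (hab : (a + 1) % L t j = b) (hne : a ≠ b) :
    (Tgraph t m).Adj (j, a) (j, b) :=
  ⟨by simp [hne], Or.inl ⟨ht, hj, Or.inl ⟨rfl, ha, by simpa [L] using hb,
    by simpa [L] using hab⟩⟩⟩

end Terr

namespace Terr2

lemma zmod_cast_inj' {N a b : ℕ} (ha : a < N) (hb : b < N) (h : (a : ZMod N) = b) : a = b := by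
  haveI : NeZero N := ⟨by omega⟩
  have := congrArg ZMod.val h
  rwa [ZMod.val_natCast_of_lt ha, ZMod.val_natCast_of_lt hb] at this

lemma zmod_two_ne {N : ℕ} (hN : 3 ≤ N) : (2 : ZMod N) ≠ 0 := by
  intro h
  have h2 : ((2 : ℕ) : ZMod N) = ((0 : ℕ) : ZMod N) := by push_cast; exact h
  have := zmod_cast_inj' (by omega : 2 < N) (by omega : 0 < N) h2
  omega

lemma zmod_four_ne {N : ℕ} (hN : 5 ≤ N) : (4 : ZMod N) ≠ 0 := by
  intro h
  have h2 : ((4 : ℕ) : ZMod N) = ((0 : ℕ) : ZMod N) := by push_cast; exact h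
  have := zmod_cast_inj' (by omega : 4 < N) (by omega : 0 < N) h2
  omega

lemma mod_to_zmod {N a b : ℕ} (h : (a + 1) % N = b) : (b : ZMod N) = (a : ZMod N) + 1 := by
  rw [← h]
  push_cast [ZMod.natCast_mod]
  ring

lemma zmod_to_mod {N a b : ℕ} (ha : 0 < N) (hb : b < N) (h : (b : ZMod N) = (a : ZMod N) + 1) :
    (a + 1) % N = b := by
  refine zmod_cast_inj' (Nat.mod_lt _ ha) hb ?_
  rw [ZMod.natCast_mod]
  push_cast
  rw [h]

lemma zmod_mul_cancel {c N a b : ℕ} (hc : c ≠ 0)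
    (h : ((c * a : ℕ) : ZMod (c * N)) = ((c * b : ℕ) : ZMod (c * N))) :
    ((a : ℕ) : ZMod N) = b := by
  rw [ZMod.natCast_eq_natCast_iff] at h ⊢
  exact Nat.ModEq.mul_left_cancel' hc h

lemma zmod_mul_intro {c N a b : ℕ} (h : ((a : ℕ) : ZMod N) = b) :
    ((c * a : ℕ) : ZMod (c * N)) = ((c * b : ℕ) : ZMod (c * N)) := by
  rw [ZMod.natCast_eq_natCast_iff] at h ⊢
  exact Nat.ModEq.mul_left' c h

/-- A `±1` walk in `ZMod N` with no repeats moves with a constant sign. -/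
lemma walk_const {N : ℕ} (hN : 5 ≤ N) (g : ℕ → ℕ) (ℓ : ℕ)
    (hval : ∀ q, q ≤ ℓ → g q < N)
    (hstep : ∀ q, q < ℓ → ((g (q+1) : ZMod N) = g q + 1 ∨ (g q : ZMod N) = g (q+1) + 1))
    (hinj : ∀ q q', q ≤ ℓ → q' ≤ ℓ → g q = g q' → q = q') :
    ∃ s : ZMod N, s * s = 1 ∧ (s = 1 ∨ s = -1) ∧
      ∀ q, q ≤ ℓ → (g q : ZMod N) = g 0 + q * s := by
  have h2 : (2 : ZMod N) ≠ 0 := zmod_two_ne (by omega)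
  rcases Nat.eq_zero_or_pos ℓ with rfl | hl
  · exact ⟨1, by ring, Or.inl rfl, fun q hq => by
      interval_cases q; simp⟩
  -- extract first step
  obtain ⟨s, hss, hs, hs1⟩ :
      ∃ s : ZMod N, s * s = 1 ∧ (s = 1 ∨ s = -1) ∧ (g 1 : ZMod N) = g 0 + s := by
    rcases hstep 0 hl with h | h
    · exact ⟨1, by ring, Or.inl rfl, h⟩
    · exact ⟨-1, by ring, Or.inr rfl, by rw [h]; ring⟩
  have steps : ∀ q, q < ℓ → (g (q+1) : ZMod N) = g q + s := by
    intro q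
    induction q using Nat.strong_induction_on with
    | _ q ih =>
      intro hq
      obtain ⟨e, he, hgo⟩ : ∃ e : ZMod N, (e = 1 ∨ e = -1) ∧ (g (q+1) : ZMod N) = g q + e := by
        rcases hstep q hq with h | h
        · exact ⟨1, Or.inl rfl, h⟩
        · exact ⟨-1, Or.inr rfl, by rw [h]; ring⟩
      by_cases hes : e = s
      · rw [hgo, hes]
      have hneg : e = -s := by
        rcases he with rfl | rfl <;> rcases hs with rfl | rfl
        · exact (hes rfl).elim
        · ring
        · ring
        · exact (hes rfl).elim
      rcases Nat.eq_zero_or_pos q with rfl | hq0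
      · exfalso
        rw [hs1, hneg] at hgo
        have : (2 : ZMod N) * s = 0 := by linear_combination hgo
        have h4 : (2 : ZMod N) * (s * s) = 0 := by linear_combination s * this
        rw [hss, mul_one] at h4
        exact h2 h4
      · exfalso
        obtain ⟨r, rfl⟩ : ∃ r, q = r + 1 := ⟨q - 1, by omega⟩
        have hr := ih r (by omega) (by omega)
        have : (g (r + 1 + 1) : ZMod N) = g r := by rw [hgo, hr, hneg]; ring
        have := hinj _ _ (by omega) (by omega)
          (zmod_cast_inj' (hval _ (by omega)) (hval _ (by omega)) this)
        omega
  refine ⟨s, hss, hs, ?_⟩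
  intro q
  induction q with
  | zero => intro _; simp
  | succ q ih =>
    intro hq
    rw [steps q (by omega), ih (by omega)]
    push_cast
    ring

lemma zmod_unit_cancel {N q : ℕ} {s : ZMod N} (hss : s * s = 1)
    (h : (q : ZMod N) * s = 0) : (q : ZMod N) = 0 := by
  have : (q : ZMod N) * (s * s) = 0 := by rw [← mul_assoc, h, zero_mul]
  rwa [hss, mul_one] at this

end Terr2

open Terr Terr2

theorem stmt_15 (t m : ℕ) (ht : 5 ≤ t) :
    ¬ Nonempty (cycleGraph (2 * t - 2) ↪g Tgraph t m) := by
  rintro ⟨f⟩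
  set n : ℕ := 2 * t - 2 with hn
  haveI : NeZero n := ⟨by omega⟩
  have hn8 : 8 ≤ n := by omega
  have castn : ((n : ℕ) : Fin n) = 0 := fin_natCast_self
  -- consecutive vertices of the cycle are adjacent in T
  have hadj : ∀ k : Fin n, (Tgraph t m).Adj (f k) (f (k + 1)) := by
    intro k
    rw [f.map_adj_iff, cycleGraph_adj']
    right
    rw [add_sub_cancel_left]
    have h1 : ((1 : ℕ) : Fin n).val = 1 := by
      rw [Fin.val_natCast]
      exact Nat.mod_eq_of_lt (by omega)
    simpa using h1
  have hval : ∀ k, (f k).1 ≤ m ∧ (f k).2 < L t (f k).1 := by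
    intro k
    have h := valid_of_adj (hadj k)
    exact ⟨h.1, h.2.2.1⟩
  -- the maximal level
  obtain ⟨jm, ⟨kst, hkst⟩, hmax⟩ :
      ∃ jm, (∃ k : Fin n, (f k).1 = jm) ∧ ∀ k : Fin n, (f k).1 ≤ jm := by
    obtain ⟨k0, -, hk0⟩ := Finset.exists_max_image (Finset.univ : Finset (Fin n))
      (fun k => (f k).1) ⟨0, Finset.mem_univ 0⟩
    exact ⟨(f k0).1, ⟨k0, rfl⟩, fun k => hk0 k (Finset.mem_univ k)⟩
  have hN5 : 5 ≤ L t jm := le_trans ht (L_ge ht jm)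
  by_cases hall : ∀ k : Fin n, (f k).1 = jm
  · -- Case A : the cycle lies entirely on the top level
    set N := L t jm with hNdef
    have hpos : ∀ k, (f k).2 < N := fun k => by
      have := (hval k).2; rwa [hall k] at this
    have hcard : n ≤ N := by
      have hinj : Function.Injective (fun k : Fin n => (⟨(f k).2, hpos k⟩ : Fin N)) := by
        intro a b hab
        apply f.injective
        have h2 : (f a).2 = (f b).2 := congrArg Fin.val hab
        exact Prod.ext (by rw [hall a, hall b]) h2
      simpa using Fintype.card_le_of_injective _ hinj
    have hNn : N ≠ n := by
      rcases Nat.eq_zero_or_pos jm with h0 | h1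
      · have : N = t := by rw [hNdef, h0]; simp [L]
        omega
      · obtain ⟨j, rfl⟩ : ∃ j, jm = j + 1 := ⟨jm - 1, by omega⟩
        have h1 : N = (t - 3) * L t j := L_succ t j
        have h2 : t ≤ L t j := L_ge ht j
        have h3 : 2 * L t j ≤ (t - 3) * L t j := Nat.mul_le_mul_right _ (by omega)
        omega
    have hnN : n < N := by omega
    set g : ℕ → ℕ := fun q => (f ((q : ℕ) : Fin n)).2 with hg
    have hstepg : ∀ q, q < n - 1 →
        ((g (q + 1) : ZMod N) = g q + 1 ∨ (g q : ZMod N) = g (q + 1) + 1) := by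
      intro q _
      have h := hadj ((q : ℕ) : Fin n)
      have hidx : (((q : ℕ) : Fin n) + 1) = ((q + 1 : ℕ) : Fin n) := by push_cast; ring
      rw [hidx] at h
      have hcc := adj_cases (show (Tgraph t m).Adj ((f ((q:ℕ) : Fin n)).1, (f ((q:ℕ) : Fin n)).2)
        ((f ((q+1:ℕ) : Fin n)).1, (f ((q+1:ℕ) : Fin n)).2) from h)
      rcases hcc with ⟨-, hc⟩ | ⟨hc, -⟩ | ⟨hc, -⟩
      · rw [hall] at hc
        rcases hc with h1 | h1
        · exact Or.inl (mod_to_zmod h1)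
        · exact Or.inr (mod_to_zmod h1)
      · rw [hall, hall] at hc; omega
      · rw [hall, hall] at hc; omega
    have hinjg : ∀ q q', q ≤ n - 1 → q' ≤ n - 1 → g q = g q' → q = q' := by
      intro q q' hq hq' hgg
      have : f ((q : ℕ) : Fin n) = f ((q' : ℕ) : Fin n) :=
        Prod.ext (by rw [hall, hall]) hgg
      exact fin_cast_inj (by omega) (by omega) (f.injective this)
    obtain ⟨s, hss, hs, hwalk⟩ := walk_const (by omega) g (n - 1)
      (fun q _ => hpos _) hstepg hinjg
    have hw := hwalk (n - 1) le_rfl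
    -- the wrap-around step
    have hlast := hadj (((n - 1 : ℕ)) : Fin n)
    have hidx : (((n - 1 : ℕ) : Fin n) + 1) = ((0 : ℕ) : Fin n) := by
      rw [← Nat.cast_add_one, show n - 1 + 1 = n from by omega, castn, Nat.cast_zero]
    rw [hidx] at hlast
    have hcn : ((n - 1 : ℕ) : ZMod N) + 1 = ((n : ℕ) : ZMod N) := by
      rw [← Nat.cast_add_one, show n - 1 + 1 = n from by omega]
    have hzero : ((0 : ℕ) : ZMod N) ≠ ((n : ℕ) : ZMod N) := by
      intro h
      have := zmod_cast_inj (show (0:ℕ) < N by omega) hnN h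
      omega
    have hone : ((n - 1 : ℕ) : ZMod N) ≠ ((1 : ℕ) : ZMod N) := by
      intro h
      have := zmod_cast_inj (by omega) (by omega) h
      omega
    have hstep0 : ((g 0 : ℕ) : ZMod N) = g (n - 1) + 1 ∨
        ((g (n - 1) : ℕ) : ZMod N) = g 0 + 1 := by
      have hcc := adj_cases (show (Tgraph t m).Adj
        ((f (((n-1:ℕ)) : Fin n)).1, (f (((n-1:ℕ)) : Fin n)).2)
        ((f ((0:ℕ) : Fin n)).1, (f ((0:ℕ) : Fin n)).2) from hlast)
      rcases hcc with ⟨-, hc⟩ | ⟨hc, -⟩ | ⟨hc, -⟩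
      · rw [hall] at hc
        rcases hc with h1 | h1
        · exact Or.inl (mod_to_zmod h1)
        · exact Or.inr (mod_to_zmod h1)
      · rw [hall, hall] at hc; omega
      · rw [hall, hall] at hc; omega
    rcases hstep0 with h1 | h1 <;> rw [hw] at h1 <;> rcases hs with rfl | rfl
    · exact hzero (by push_cast at h1 ⊢; linear_combination h1 + hcn)
    · exact hone (by push_cast at h1 ⊢; linear_combination h1)
    · exact hone (by push_cast at h1 ⊢; linear_combination h1)
    · exact hzero (by push_cast at h1 ⊢; linear_combination h1 + hcn)
  · -- Case B : the cycle leaves the top level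
    push_neg at hall
    obtain ⟨k0, hk0⟩ := hall
    classical
    have fwrap : ∀ a b : ℕ, a = b + n → ((a : ℕ) : Fin n) = ((b : ℕ) : Fin n) := by
      intro a b hab
      subst hab
      rw [Nat.cast_add, castn, add_zero]
    have hm1 : ((n - 1 : ℕ) : Fin n) = -1 := by
      have h0 : ((n - 1 : ℕ) : Fin n) + 1 = 0 := by
        rw [← Nat.cast_add_one, show n - 1 + 1 = n from by omega, castn]
      exact eq_neg_of_add_eq_zero_left h0
    -- extract a maximal arc on the top level
    obtain ⟨p, ℓ, harc, hend1, hend2⟩ :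
        ∃ (p : Fin n) (ℓ : ℕ), (∀ q, q ≤ ℓ → (f (p + ((q : ℕ) : Fin n))).1 = jm) ∧
          (f (p - 1)).1 ≠ jm ∧ (f (p + ((ℓ + 1 : ℕ) : Fin n))).1 ≠ jm := by
      have hsub : ∀ k k' : Fin n, k - (((k - k').val : ℕ) : Fin n) = k' := by
        intro k k'
        rw [Fin.cast_val_eq_self]
        exact sub_sub_cancel k k'
      have hadd : ∀ k k' : Fin n, k + (((k' - k).val : ℕ) : Fin n) = k' := by
        intro k k'
        rw [Fin.cast_val_eq_self]
        exact add_sub_cancel k k'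
      have hne : kst ≠ k0 := by rintro rfl; exact hk0 hkst
      have hfind1 : ∃ d : ℕ, (f (kst - ((d + 1 : ℕ) : Fin n))).1 ≠ jm := by
        refine ⟨(kst - k0).val - 1, ?_⟩
        have hvpos : 1 ≤ (kst - k0).val := by
          rcases Nat.eq_zero_or_pos (kst - k0).val with h | h
          · exfalso
            apply hne
            have : kst - k0 = 0 := Fin.ext (by simpa using h)
            have := sub_eq_zero.mp this
            exact this
          · exact h
        rw [show (kst - k0).val - 1 + 1 = (kst - k0).val from by omega, hsub]
        exact hk0
      have hfind2 : ∃ d : ℕ, (f (kst + ((d + 1 : ℕ) : Fin n))).1 ≠ jm := by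
        refine ⟨(k0 - kst).val - 1, ?_⟩
        have hvpos : 1 ≤ (k0 - kst).val := by
          rcases Nat.eq_zero_or_pos (k0 - kst).val with h | h
          · exfalso
            apply hne
            have : k0 - kst = 0 := Fin.ext (by simpa using h)
            exact (sub_eq_zero.mp this).symm
          · exact h
        rw [show (k0 - kst).val - 1 + 1 = (k0 - kst).val from by omega, hadd]
        exact hk0
      refine ⟨kst - ((Nat.find hfind1 : ℕ) : Fin n), Nat.find hfind1 + Nat.find hfind2,
        ?_, ?_, ?_⟩
      · intro q hq
        by_cases hq1 : q ≤ Nat.find hfind1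
        · have hidx : kst - ((Nat.find hfind1 : ℕ) : Fin n) + ((q : ℕ) : Fin n) =
              kst - ((Nat.find hfind1 - q : ℕ) : Fin n) := by
            have hcc : ((Nat.find hfind1 : ℕ) : Fin n) =
                ((Nat.find hfind1 - q : ℕ) : Fin n) + ((q : ℕ) : Fin n) := by
              rw [← Nat.cast_add]; congr 1; omega
            rw [hcc]; ring
          rw [hidx]
          rcases Nat.eq_zero_or_pos (Nat.find hfind1 - q) with h | h
          · rw [h]; simpa using hkst
          · obtain ⟨e, he⟩ : ∃ e, Nat.find hfind1 - q = e + 1 := ⟨Nat.find hfind1 - q - 1, by omega⟩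
            rw [he]
            by_contra hcon
            exact (Nat.find_min hfind1 (by omega : e < Nat.find hfind1)) hcon
        · obtain ⟨e, he⟩ : ∃ e, q = Nat.find hfind1 + e := ⟨q - Nat.find hfind1, by omega⟩
          have hidx : kst - ((Nat.find hfind1 : ℕ) : Fin n) + ((q : ℕ) : Fin n) =
              kst + ((e : ℕ) : Fin n) := by
            rw [he, Nat.cast_add]; ring
          rw [hidx]
          rcases Nat.eq_zero_or_pos e with h | h
          · rw [h]; simpa using hkst
          · obtain ⟨e', he'⟩ : ∃ e', e = e' + 1 := ⟨e - 1, by omega⟩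
            rw [he']
            by_contra hcon
            exact (Nat.find_min hfind2 (by omega : e' < Nat.find hfind2)) hcon
      · have hidx : kst - ((Nat.find hfind1 : ℕ) : Fin n) - 1 =
            kst - ((Nat.find hfind1 + 1 : ℕ) : Fin n) := by
          rw [Nat.cast_add, Nat.cast_one]; ring
        rw [hidx]
        exact Nat.find_spec hfind1
      · have hidx : kst - ((Nat.find hfind1 : ℕ) : Fin n) +
            ((Nat.find hfind1 + Nat.find hfind2 + 1 : ℕ) : Fin n) =
            kst + ((Nat.find hfind2 + 1 : ℕ) : Fin n) := by
          push_cast; ring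
        rw [hidx]
        exact Nat.find_spec hfind2
    -- basic index helpers
    have hpadd : ∀ q q' : ℕ, q < n → q' < n →
        p + ((q : ℕ) : Fin n) = p + ((q' : ℕ) : Fin n) → q = q' := by
      intro q q' hq hq' h
      exact fin_cast_inj hq hq' (add_left_cancel h)
    have hpm1 : p - 1 = p + ((n - 1 : ℕ) : Fin n) := by rw [hm1]; ring
    -- bound on the arc length
    have hlle : ℓ ≤ n - 2 := by
      by_contra hcon
      apply hend1
      rw [hpm1]
      exact harc (n - 1) (by omega)
    -- endpoints are spokes one level down
    have hL0 : (f p).1 = jm := by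
      have := harc 0 (by omega)
      rwa [Nat.cast_zero, add_zero] at this
    have hadjL := hadj (p - 1)
    rw [sub_add_cancel] at hadjL
    have hspl : jm = (f (p - 1)).1 + 1 ∧ (f p).2 = (t - 3) * (f (p - 1)).2 := by
      rcases adj_cases (show (Tgraph t m).Adj ((f (p - 1)).1, (f (p - 1)).2)
          ((f p).1, (f p).2) from hadjL) with ⟨h1, -⟩ | ⟨h1, h2⟩ | ⟨h1, -⟩
      · exact absurd (h1 ▸ hL0 : (f (p - 1)).1 = jm).symm (Ne.symm hend1)
      · exact ⟨hL0 ▸ h1, h2⟩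
      · exfalso
        have := hmax (p - 1)
        omega
    have hadjR := hadj (p + ((ℓ : ℕ) : Fin n))
    have hidxR : p + ((ℓ : ℕ) : Fin n) + 1 = p + ((ℓ + 1 : ℕ) : Fin n) := by push_cast; ring
    rw [hidxR] at hadjR
    have hR0 : (f (p + ((ℓ : ℕ) : Fin n))).1 = jm := harc ℓ le_rfl
    have hspr : jm = (f (p + ((ℓ + 1 : ℕ) : Fin n))).1 + 1 ∧
        (f (p + ((ℓ : ℕ) : Fin n))).2 = (t - 3) * (f (p + ((ℓ + 1 : ℕ) : Fin n))).2 := by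
      rcases adj_cases (show (Tgraph t m).Adj
          ((f (p + ((ℓ + 1 : ℕ) : Fin n))).1, (f (p + ((ℓ + 1 : ℕ) : Fin n))).2)
          ((f (p + ((ℓ : ℕ) : Fin n))).1, (f (p + ((ℓ : ℕ) : Fin n))).2) from hadjR.symm)
        with ⟨h1, -⟩ | ⟨h1, h2⟩ | ⟨h1, -⟩
      · exact absurd (h1 ▸ hR0 : (f (p + ((ℓ + 1 : ℕ) : Fin n))).1 = jm).symm (Ne.symm hend2)
      · exact ⟨hR0 ▸ h1, h2⟩
      · exfalso
        have := hmax (p + ((ℓ + 1 : ℕ) : Fin n))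
        omega
    have hj'' : (f (p + ((ℓ + 1 : ℕ) : Fin n))).1 = (f (p - 1)).1 := by omega
    have hLI : (f (p - 1)).2 < L t (f (p - 1)).1 := (hval (p - 1)).2
    have hNL : L t jm = (t - 3) * L t (f (p - 1)).1 := by
      rw [hspl.1]
      exact L_succ t _
    have hL'5 : 5 ≤ L t (f (p - 1)).1 := le_trans ht (L_ge ht _)
    have hjm_m : jm ≤ m := hL0 ▸ (hval p).1
    have hj'_m : (f (p - 1)).1 ≤ m := (hval (p - 1)).1
    -- exclude the case ℓ = n - 2
    have hlne : ℓ ≠ n - 2 := by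
      intro hc
      have hidx : p + ((ℓ + 1 : ℕ) : Fin n) = p - 1 := by
        rw [hpm1, show ℓ + 1 = n - 1 from by omega]
      have hii : (f (p + ((ℓ : ℕ) : Fin n))).2 = (f p).2 := by
        rw [hspr.2, hidx, ← hspl.2]
      have hfe : f (p + ((ℓ : ℕ) : Fin n)) = f p := by
        apply Prod.ext
        · rw [hR0, hL0]
        · exact hii
      have := f.injective hfe
      have h0 : p + ((ℓ : ℕ) : Fin n) = p + ((0 : ℕ) : Fin n) := by
        rw [Nat.cast_zero, add_zero]; exact this
      have := hpadd ℓ 0 (by omega) (by omega) h0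
      omega
    have hlle3 : ℓ ≤ n - 3 := by omega
    -- the arc has positive length
    have hl1 : 1 ≤ ℓ := by
      by_contra h
      have hl0 : ℓ = 0 := by omega
      have h1 : (f p).2 = (t - 3) * (f (p + ((0 + 1 : ℕ) : Fin n))).2 := by
        have := hspr.2
        rw [hl0] at this
        rw [← this, Nat.cast_zero, add_zero]
      have h2 : (f (p - 1)).2 = (f (p + ((0 + 1 : ℕ) : Fin n))).2 := by
        have h3 := hspl.2
        rw [h1] at h3
        exact (Nat.eq_of_mul_eq_mul_left (by omega) h3.symm)
      have hfe : f (p - 1) = f (p + ((0 + 1 : ℕ) : Fin n)) := by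
        apply Prod.ext
        · have := hspr.1
          rw [hl0] at this
          omega
        · exact h2
      have h0 := f.injective hfe
      rw [hpm1] at h0
      have := hpadd (n - 1) 1 (by omega) (by omega) h0
      omega
    -- the walk along the arc
    obtain ⟨s, hss, hs, hwalk⟩ := walk_const (N := L t jm) (by omega)
      (fun q => (f (p + ((q : ℕ) : Fin n))).2) ℓ
      (fun q hq => by
        have h := (hval (p + ((q : ℕ) : Fin n))).2
        rwa [harc q hq] at h)
      (fun q hq => by
        have h := hadj (p + ((q : ℕ) : Fin n))
        have hidx : p + ((q : ℕ) : Fin n) + 1 = p + ((q + 1 : ℕ) : Fin n) := by push_cast; ring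
        rw [hidx] at h
        rcases adj_cases (show (Tgraph t m).Adj
            ((f (p + ((q : ℕ) : Fin n))).1, (f (p + ((q : ℕ) : Fin n))).2)
            ((f (p + ((q + 1 : ℕ) : Fin n))).1, (f (p + ((q + 1 : ℕ) : Fin n))).2) from h)
          with ⟨-, hcq⟩ | ⟨hcq, -⟩ | ⟨hcq, -⟩
        · rw [harc q (by omega)] at hcq
          rcases hcq with h1 | h1
          · exact Or.inl (mod_to_zmod h1)
          · exact Or.inr (mod_to_zmod h1)
        · rw [harc q (by omega), harc (q + 1) (by omega)] at hcq; omega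
        · rw [harc q (by omega), harc (q + 1) (by omega)] at hcq; omega)
      (fun q q' hq hq' hgg => by
        have hfe : f (p + ((q : ℕ) : Fin n)) = f (p + ((q' : ℕ) : Fin n)) := by
          apply Prod.ext
          · rw [harc q hq, harc q' hq']
          · exact hgg
        exact hpadd q q' (by omega) (by omega) (f.injective hfe))
    -- divisibility of the arc length by t - 3
    have hdvd : (t - 3) ∣ L t jm := Dvd.intro _ hNL.symm
    have hdiv : (t - 3) ∣ ℓ := by
      have hphi := congrArg (ZMod.castHom hdvd (ZMod (t - 3))) (hwalk ℓ le_rfl)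
      simp only [map_add, map_mul, map_natCast] at hphi
      have hg0 : (f (p + ((0 : ℕ) : Fin n))).2 = (t - 3) * (f (p - 1)).2 := by
        rw [Nat.cast_zero, add_zero]; exact hspl.2
      rw [hspr.2, hg0] at hphi
      have hz : ∀ a : ℕ, (((t - 3) * a : ℕ) : ZMod (t - 3)) = 0 := by
        intro a
        rw [Nat.cast_mul, ZMod.natCast_self, zero_mul]
      rw [hz, hz] at hphi
      have hss' : (ZMod.castHom hdvd (ZMod (t - 3))) s *
          (ZMod.castHom hdvd (ZMod (t - 3))) s = 1 := by
        rw [← map_mul, hss, map_one]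
      have hl0 : ((ℓ : ℕ) : ZMod (t - 3)) = 0 :=
        zmod_unit_cancel hss' (by linear_combination -hphi)
      haveI : NeZero (t - 3) := ⟨by omega⟩
      exact (ZMod.natCast_eq_zero_iff _ _).mp hl0
    obtain ⟨c, hc⟩ := hdiv
    have hc12 : ℓ = t - 3 ∨ ℓ = 2 * t - 6 := by
      have hcle : c ≤ 2 := by
        by_contra hcge
        push_neg at hcge
        have h3 : (t - 3) * 3 ≤ (t - 3) * c := Nat.mul_le_mul_left _ (by omega)
        omega
      interval_cases c <;> omega
    -- the key non-adjacency fact in the (2t-2)-cycle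
    have hnoadj : ∀ a : Fin n, ¬ (cycleGraph n).Adj a (a + ((t - 1 : ℕ) : Fin n)) := by
      intro a hadj'
      rw [cycleGraph_adj'] at hadj'
      have hv : ((t - 1 : ℕ) : Fin n).val = t - 1 := by
        rw [Fin.val_natCast]
        exact Nat.mod_eq_of_lt (by omega)
      have hsub1 : a + ((t - 1 : ℕ) : Fin n) - a = ((t - 1 : ℕ) : Fin n) := by ring
      have hneg : a - (a + ((t - 1 : ℕ) : Fin n)) = ((t - 1 : ℕ) : Fin n) := by
        have h2 : ((t - 1 : ℕ) : Fin n) + ((t - 1 : ℕ) : Fin n) = 0 := by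
          rw [← Nat.cast_add, show t - 1 + (t - 1) = n from by omega, castn]
        have h3 : a - (a + ((t - 1 : ℕ) : Fin n)) = -((t - 1 : ℕ) : Fin n) := by ring
        rw [h3, neg_eq_of_add_eq_zero_left h2]
      rcases hadj' with h | h
      · rw [hneg, hv] at h; omega
      · rw [hsub1, hv] at h; omega
    have hg0c : (f (p + ((0 : ℕ) : Fin n))).2 = (t - 3) * (f (p - 1)).2 := by
      rw [Nat.cast_zero, add_zero]; exact hspl.2
    have h2z : (2 : ZMod (L t (f (p - 1)).1)) ≠ 0 := zmod_two_ne (by omega)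
    have h4z : (4 : ZMod (L t (f (p - 1)).1)) ≠ 0 := zmod_four_ne (by omega)
    rcases hc12 with hcl | hcl
    · -- arc of length t - 3
      subst hcl
      have hwl := hwalk (t - 3) le_rfl
      rw [hspr.2, hg0c] at hwl
      have hiv' : (f (p + ((t - 3 + 1 : ℕ) : Fin n))).2 < L t (f (p - 1)).1 := by
        have h := (hval (p + ((t - 3 + 1 : ℕ) : Fin n))).2
        rwa [hj''] at h
      have hidx : p + ((t - 3 + 1 : ℕ) : Fin n) = (p - 1) + ((t - 1 : ℕ) : Fin n) := by
        have h1 : ((t - 1 : ℕ) : Fin n) = ((t - 3 + 1 : ℕ) : Fin n) + 1 := by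
          rw [← Nat.cast_add_one]; congr 1; omega
        rw [h1]; ring
      rcases hs with rfl | rfl
      · -- s = 1
        have zmm : (((t - 3) * (f (p + ((t - 3 + 1 : ℕ) : Fin n))).2 : ℕ) : ZMod (L t jm)) =
            (((t - 3) * ((f (p - 1)).2 + 1) : ℕ) : ZMod (L t jm)) := by
          push_cast at hwl ⊢
          linear_combination hwl
        rw [hNL] at zmm
        have hii' := zmod_mul_cancel (show t - 3 ≠ 0 by omega) zmm
        have hne : (f (p - 1)).2 ≠ (f (p + ((t - 3 + 1 : ℕ) : Fin n))).2 := by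
          intro h
          rw [← h] at hii'
          have h1 : ((1 : ℕ) : ZMod (L t (f (p - 1)).1)) = ((0 : ℕ) : ZMod (L t (f (p - 1)).1)) := by
            push_cast at hii' ⊢
            linear_combination -hii'
          have := zmod_cast_inj (show (1 : ℕ) < L t (f (p - 1)).1 by omega) (by omega) h1
          omega
        have hmod : ((f (p - 1)).2 + 1) % L t (f (p - 1)).1 =
            (f (p + ((t - 3 + 1 : ℕ) : Fin n))).2 :=
          zmod_to_mod (by omega) hiv' (by push_cast at hii' ⊢; linear_combination hii')
        have hAdjT : (Tgraph t m).Adj (f (p - 1)) (f (p + ((t - 3 + 1 : ℕ) : Fin n))) := by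
          have h12 : f (p + ((t - 3 + 1 : ℕ) : Fin n)) =
              ((f (p - 1)).1, (f (p + ((t - 3 + 1 : ℕ) : Fin n))).2) := Prod.ext hj'' rfl
          rw [h12]
          exact adj_level ht hj'_m hLI hiv' hmod hne
        have hCadj := f.map_adj_iff.mp hAdjT
        rw [hidx] at hCadj
        exact hnoadj (p - 1) hCadj
      · -- s = -1
        have zmm : (((t - 3) * ((f (p + ((t - 3 + 1 : ℕ) : Fin n))).2 + 1) : ℕ) : ZMod (L t jm)) =
            (((t - 3) * (f (p - 1)).2 : ℕ) : ZMod (L t jm)) := by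
          push_cast at hwl ⊢
          linear_combination hwl
        rw [hNL] at zmm
        have hii' := zmod_mul_cancel (show t - 3 ≠ 0 by omega) zmm
        have hne : (f (p + ((t - 3 + 1 : ℕ) : Fin n))).2 ≠ (f (p - 1)).2 := by
          intro h
          rw [h] at hii'
          have h1 : ((1 : ℕ) : ZMod (L t (f (p - 1)).1)) = ((0 : ℕ) : ZMod (L t (f (p - 1)).1)) := by
            push_cast at hii' ⊢
            linear_combination hii'
          have := zmod_cast_inj (show (1 : ℕ) < L t (f (p - 1)).1 by omega) (by omega) h1
          omega
        have hmod : ((f (p + ((t - 3 + 1 : ℕ) : Fin n))).2 + 1) % L t (f (p - 1)).1 =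
            (f (p - 1)).2 :=
          zmod_to_mod (by omega) hLI (by push_cast at hii' ⊢; linear_combination -hii')
        have hAdjT : (Tgraph t m).Adj (f (p + ((t - 3 + 1 : ℕ) : Fin n))) (f (p - 1)) := by
          have h12 : f (p + ((t - 3 + 1 : ℕ) : Fin n)) =
              ((f (p - 1)).1, (f (p + ((t - 3 + 1 : ℕ) : Fin n))).2) := Prod.ext hj'' rfl
          rw [h12]
          exact adj_level ht hj'_m hiv' hLI hmod hne
        have hCadj := (f.map_adj_iff.mp hAdjT).symm
        rw [hidx] at hCadj
        exact hnoadj (p - 1) hCadj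
    · -- arc of length 2t - 6
      subst hcl
      have hwl := hwalk (2 * t - 6) le_rfl
      rw [hspr.2, hg0c] at hwl
      have hcast : ((2 * t - 6 : ℕ) : ZMod (L t jm)) = ((t - 3 : ℕ) : ZMod (L t jm)) * 2 := by
        rw [show (2 * t - 6 : ℕ) = (t - 3) * 2 from by omega]
        push_cast
        ring
      -- the two extra adjacencies
      have hadjW1 := hadj (p + ((2 * t - 6 + 1 : ℕ) : Fin n))
      have hidx1 : p + ((2 * t - 6 + 1 : ℕ) : Fin n) + 1 = p + ((2 * t - 6 + 2 : ℕ) : Fin n) := by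
        push_cast; ring
      rw [hidx1] at hadjW1
      have hadjW2 := hadj (p + ((2 * t - 6 + 2 : ℕ) : Fin n))
      have hidx2 : p + ((2 * t - 6 + 2 : ℕ) : Fin n) + 1 = p - 1 := by
        rw [hpm1, add_assoc]
        congr 1
        rw [← Nat.cast_add_one]
        congr 1
        omega
      rw [hidx2] at hadjW2
      -- classification of the two adjacencies
      have hw := adj_cases (show (Tgraph t m).Adj
        ((f (p + ((2 * t - 6 + 2 : ℕ) : Fin n))).1, (f (p + ((2 * t - 6 + 2 : ℕ) : Fin n))).2)
        ((f (p - 1)).1, (f (p - 1)).2) from hadjW2)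
      have hv2 := adj_cases (show (Tgraph t m).Adj
        ((f (p + ((2 * t - 6 + 1 : ℕ) : Fin n))).1, (f (p + ((2 * t - 6 + 1 : ℕ) : Fin n))).2)
        ((f (p + ((2 * t - 6 + 2 : ℕ) : Fin n))).1, (f (p + ((2 * t - 6 + 2 : ℕ) : Fin n))).2)
        from hadjW1)
      -- exclude the "w at top level" case
      rcases hw with ⟨hw1, hwmod⟩ | ⟨hw1, hwpos⟩ | ⟨hw1, hwpos⟩
      rotate_right
      · -- k2 at top level: then f k2 = f p, impossible
        exfalso
        have hfe : f (p + ((2 * t - 6 + 2 : ℕ) : Fin n)) = f p := by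
          apply Prod.ext
          · omega
          · rw [hwpos, ← hspl.2]
        have h0 := f.injective hfe
        have h0' : p + ((2 * t - 6 + 2 : ℕ) : Fin n) = p + ((0 : ℕ) : Fin n) := by
          rw [Nat.cast_zero, add_zero]; exact h0
        have := hpadd _ _ (by omega) (by omega) h0'
        omega
      all_goals (rcases hv2 with ⟨hv1, hvmod⟩ | ⟨hv1, hvpos⟩ | ⟨hv1, hvpos⟩)
      · -- main case : w1 ∧ v1
        rw [← hw1] at hwmod
        rw [← hv1, ← hw1] at hvmod
        have hx : (f (p + ((2 * t - 6 + 2 : ℕ) : Fin n))).2 < L t (f (p - 1)).1 := by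
          have h := (hval (p + ((2 * t - 6 + 2 : ℕ) : Fin n))).2
          rwa [← hw1] at h
        have hwz : ((f (p - 1)).2 : ZMod (L t (f (p - 1)).1)) =
              ((f (p + ((2 * t - 6 + 2 : ℕ) : Fin n))).2 : ZMod (L t (f (p - 1)).1)) + 1 ∨
            ((f (p + ((2 * t - 6 + 2 : ℕ) : Fin n))).2 : ZMod (L t (f (p - 1)).1)) =
              ((f (p - 1)).2 : ZMod (L t (f (p - 1)).1)) + 1 := by
          rcases hwmod with h | h
          · exact Or.inl (mod_to_zmod h)
          · exact Or.inr (mod_to_zmod h)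
        have hvz : ((f (p + ((2 * t - 6 + 2 : ℕ) : Fin n))).2 : ZMod (L t (f (p - 1)).1)) =
              ((f (p + ((2 * t - 6 + 1 : ℕ) : Fin n))).2 : ZMod (L t (f (p - 1)).1)) + 1 ∨
            ((f (p + ((2 * t - 6 + 1 : ℕ) : Fin n))).2 : ZMod (L t (f (p - 1)).1)) =
              ((f (p + ((2 * t - 6 + 2 : ℕ) : Fin n))).2 : ZMod (L t (f (p - 1)).1)) + 1 := by
          rcases hvmod with h | h
          · exact Or.inl (mod_to_zmod h)
          · exact Or.inr (mod_to_zmod h)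
        have hmid := hwalk (t - 3) (by omega)
        rw [hg0c] at hmid
        have hMlt : (f (p + ((t - 3 : ℕ) : Fin n))).2 < L t jm := by
          have h := (hval (p + ((t - 3 : ℕ) : Fin n))).2
          rwa [harc (t - 3) (by omega)] at h
        have hxlt : (t - 3) * (f (p + ((2 * t - 6 + 2 : ℕ) : Fin n))).2 < L t jm := by
          rw [hNL]
          exact mymul_lt (by omega) hx
        have hidxfin : p + ((t - 3 : ℕ) : Fin n) =
            (p + ((2 * t - 6 + 2 : ℕ) : Fin n)) + ((t - 1 : ℕ) : Fin n) := by
          rw [add_assoc, ← Nat.cast_add,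
            fwrap (2 * t - 6 + 2 + (t - 1)) (t - 3) (by omega)]
        -- common ending given the midpoint identification
        have hfinish : (f (p + ((t - 3 : ℕ) : Fin n))).2 =
            (t - 3) * (f (p + ((2 * t - 6 + 2 : ℕ) : Fin n))).2 → False := by
          intro hMeq
          have hAdjT : (Tgraph t m).Adj (f (p + ((2 * t - 6 + 2 : ℕ) : Fin n)))
              (f (p + ((t - 3 : ℕ) : Fin n))) := by
            have hk2eq : f (p + ((2 * t - 6 + 2 : ℕ) : Fin n)) =
                ((f (p - 1)).1, (f (p + ((2 * t - 6 + 2 : ℕ) : Fin n))).2) :=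
              Prod.ext hw1.symm rfl
            have hmid_eq : f (p + ((t - 3 : ℕ) : Fin n)) =
                ((f (p - 1)).1 + 1, (t - 3) * (f (p + ((2 * t - 6 + 2 : ℕ) : Fin n))).2) := by
              apply Prod.ext
              · rw [harc (t - 3) (by omega)]; omega
              · exact hMeq
            rw [hk2eq, hmid_eq]
            exact adj_spoke ht (by omega) hx
          have hCadj := f.map_adj_iff.mp hAdjT
          rw [hidxfin] at hCadj
          exact hnoadj _ hCadj
        apply hfinish
        -- identify the midpoint of the arc with the spoke above k2
        rcases hs with rfl | rfl
        · -- s = 1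
          have zmm : (((t - 3) * (f (p + ((2 * t - 6 + 1 : ℕ) : Fin n))).2 : ℕ) : ZMod (L t jm)) =
              (((t - 3) * ((f (p - 1)).2 + 2) : ℕ) : ZMod (L t jm)) := by
            push_cast at hwl hcast ⊢
            linear_combination hwl + hcast
          rw [hNL] at zmm
          have hII' := zmod_mul_cancel (show t - 3 ≠ 0 by omega) zmm
          have hII2 : ((f (p + ((2 * t - 6 + 1 : ℕ) : Fin n))).2 : ZMod (L t (f (p - 1)).1)) =
              ((f (p - 1)).2 : ZMod (L t (f (p - 1)).1)) + 2 := by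
            have e2 : (((f (p - 1)).2 + 2 : ℕ) : ZMod (L t (f (p - 1)).1)) =
                ((f (p - 1)).2 : ZMod (L t (f (p - 1)).1)) + 2 := by
              rw [Nat.cast_add, Nat.cast_ofNat]
            rw [hII', e2]
          have hX : ((f (p + ((2 * t - 6 + 2 : ℕ) : Fin n))).2 : ZMod (L t (f (p - 1)).1)) =
              ((f (p - 1)).2 : ZMod (L t (f (p - 1)).1)) + 1 := by
            rcases hwz with hA | hA <;> rcases hvz with hB | hB
            · exact absurd (show (4 : ZMod (L t (f (p - 1)).1)) = 0 by
                linear_combination -hA - hB - hII2) h4z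
            · exact absurd (show (2 : ZMod (L t (f (p - 1)).1)) = 0 by
                linear_combination -hA + hB - hII2) h2z
            · exact absurd (show (2 : ZMod (L t (f (p - 1)).1)) = 0 by
                linear_combination hA - hB - hII2) h2z
            · exact hA
          have hXn : (((f (p + ((2 * t - 6 + 2 : ℕ) : Fin n))).2 : ℕ) : ZMod (L t (f (p - 1)).1)) =
              (((f (p - 1)).2 + 1 : ℕ) : ZMod (L t (f (p - 1)).1)) := by
            have e1 : (((f (p - 1)).2 + 1 : ℕ) : ZMod (L t (f (p - 1)).1)) =
                ((f (p - 1)).2 : ZMod (L t (f (p - 1)).1)) + 1 := by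
              rw [Nat.cast_add, Nat.cast_one]
            rw [e1]
            exact hX
          have h5 := zmod_mul_intro (c := t - 3) hXn
          rw [← hNL] at h5
          have hsplit : (((t - 3) * ((f (p - 1)).2 + 1) : ℕ) : ZMod (L t jm)) =
              (((t - 3) * (f (p - 1)).2 : ℕ) : ZMod (L t jm)) + ((t - 3 : ℕ) : ZMod (L t jm)) := by
            rw [show (t - 3) * ((f (p - 1)).2 + 1) = (t - 3) * (f (p - 1)).2 + (t - 3) from by ring,
              Nat.cast_add]
          refine zmod_cast_inj hMlt hxlt ?_
          linear_combination hmid - h5 - hsplit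
        · -- s = -1
          have zmm : (((t - 3) * ((f (p + ((2 * t - 6 + 1 : ℕ) : Fin n))).2 + 2) : ℕ) : ZMod (L t jm)) =
              (((t - 3) * (f (p - 1)).2 : ℕ) : ZMod (L t jm)) := by
            push_cast at hwl hcast ⊢
            linear_combination hwl - hcast
          rw [hNL] at zmm
          have hII' := zmod_mul_cancel (show t - 3 ≠ 0 by omega) zmm
          have hII2 : ((f (p - 1)).2 : ZMod (L t (f (p - 1)).1)) =
              ((f (p + ((2 * t - 6 + 1 : ℕ) : Fin n))).2 : ZMod (L t (f (p - 1)).1)) + 2 := by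
            have e2' := Nat.cast_add (R := ZMod (L t (f (p - 1)).1))
              (f (p + ((2 * t - 6 + 1 : ℕ) : Fin n))).2 2
            have e4 : ((2 : ℕ) : ZMod (L t (f (p - 1)).1)) = 2 := Nat.cast_ofNat
            linear_combination -hII' + e2' + e4
          have hX : ((f (p - 1)).2 : ZMod (L t (f (p - 1)).1)) =
              ((f (p + ((2 * t - 6 + 2 : ℕ) : Fin n))).2 : ZMod (L t (f (p - 1)).1)) + 1 := by
            rcases hwz with hA | hA <;> rcases hvz with hB | hB
            · exact hA
            · exact absurd (show (2 : ZMod (L t (f (p - 1)).1)) = 0 by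
                linear_combination hA - hB - hII2) h2z
            · exact absurd (show (2 : ZMod (L t (f (p - 1)).1)) = 0 by
                linear_combination -hA + hB - hII2) h2z
            · exact absurd (show (4 : ZMod (L t (f (p - 1)).1)) = 0 by
                linear_combination -hA - hB - hII2) h4z
          have hXn : (((f (p + ((2 * t - 6 + 2 : ℕ) : Fin n))).2 + 1 : ℕ) : ZMod (L t (f (p - 1)).1)) =
              (((f (p - 1)).2 : ℕ) : ZMod (L t (f (p - 1)).1)) := by
            have e3 := Nat.cast_add (R := ZMod (L t (f (p - 1)).1))
              (f (p + ((2 * t - 6 + 2 : ℕ) : Fin n))).2 1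
            have e4 : ((1 : ℕ) : ZMod (L t (f (p - 1)).1)) = 1 := Nat.cast_one
            linear_combination e3 + e4 - hX
          have h5 := zmod_mul_intro (c := t - 3) hXn
          rw [← hNL] at h5
          have hsplit2 : (((t - 3) * ((f (p + ((2 * t - 6 + 2 : ℕ) : Fin n))).2 + 1) : ℕ) : ZMod (L t jm)) =
              (((t - 3) * (f (p + ((2 * t - 6 + 2 : ℕ) : Fin n))).2 : ℕ) : ZMod (L t jm)) +
                ((t - 3 : ℕ) : ZMod (L t jm)) := by
            rw [show (t - 3) * ((f (p + ((2 * t - 6 + 2 : ℕ) : Fin n))).2 + 1) =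
              (t - 3) * (f (p + ((2 * t - 6 + 2 : ℕ) : Fin n))).2 + (t - 3) from by ring,
              Nat.cast_add]
          refine zmod_cast_inj hMlt hxlt ?_
          linear_combination hmid - h5 + hsplit2

      · -- v2 : k2 one level above k1, i.e. top level : f k2 = f (p + ℓ)
        exfalso
        have hfe : f (p + ((2 * t - 6 + 2 : ℕ) : Fin n)) = f (p + ((2 * t - 6 : ℕ) : Fin n)) := by
          apply Prod.ext
          · rw [hR0]; omega
          · rw [hvpos, ← hspr.2]
        have := hpadd _ _ (by omega) (by omega) (f.injective hfe)
        omega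
      · -- v3 with w1 : level clash
        exfalso
        omega
      · -- w2 with v1 : level clash
        exfalso
        omega
      · -- w2 with v2 : top level again
        exfalso
        have hfe : f (p + ((2 * t - 6 + 2 : ℕ) : Fin n)) = f (p + ((2 * t - 6 : ℕ) : Fin n)) := by
          apply Prod.ext
          · rw [hR0]; omega
          · rw [hvpos, ← hspr.2]
        have := hpadd _ _ (by omega) (by omega) (f.injective hfe)
        omega
      · -- w2 with v3 : both endpoints spoke to k2
        exfalso
        have hii : (f (p - 1)).2 = (f (p + ((2 * t - 6 + 1 : ℕ) : Fin n))).2 := by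
          rw [hwpos, ← hvpos]
        have hfe : f (p - 1) = f (p + ((2 * t - 6 + 1 : ℕ) : Fin n)) := by
          apply Prod.ext
          · omega
          · exact hii
        have h0 := f.injective hfe
        rw [hpm1] at h0
        have := hpadd _ _ (by omega) (by omega) h0
        omega
end

section
/- Let t ≥ 5, d ≥ 1 be integers, m ≥ 0, and let x, y be vertices of B_m with dist_{T_m}(x, y) ≤ d. Then dist_{B_m}(x, y) ≤ (t−2)^d. -/
open SimpleGraph

/-- Distance along the boundary cycle `B_m` (of length `n`) between positions `a, b < n`. -/
def cycleDist (n a b : ℕ) : ℕ :=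
  min (max a b - min a b) (n - (max a b - min a b))

lemma cycleDist_triangle (n a b c : ℕ) (ha : a < n) (hb : b < n) (hc : c < n) :
    cycleDist n a c ≤ cycleDist n a b + cycleDist n b c := by
  unfold cycleDist; omega

lemma cycleDist_comm (n a b : ℕ) : cycleDist n a b = cycleDist n b a := by
  unfold cycleDist; omega

/-- the projection of a vertex to the outer cycle scale -/
def tproj (t m : ℕ) (u : ℕ × ℕ) : ℕ := u.2 * (t - 3) ^ (m - u.1)

lemma pow_split (t m j : ℕ) (h : j ≤ m) :
    t * (t - 3) ^ m = (t * (t - 3) ^ j) * (t - 3) ^ (m - j) := by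
  rw [mul_assoc, ← pow_add]
  congr 2
  omega

lemma tedge' (t m : ℕ) (u v : ℕ × ℕ) (h : tadjAux t m u v) :
    5 ≤ t ∧ u.1 ≤ m ∧ v.1 ≤ m ∧ u.2 < t * (t - 3) ^ u.1 ∧ v.2 < t * (t - 3) ^ v.1 ∧
      ((u.1 = v.1 ∧
          cycleDist (t * (t - 3) ^ m) (tproj t m u) (tproj t m v) ≤ (t - 3) ^ (m - u.1)) ∨
       ((u.1 = v.1 + 1 ∨ v.1 = u.1 + 1) ∧ tproj t m u = tproj t m v)) := by
  obtain ⟨ht, hvm, h | h⟩ := h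
  · -- cycle edge
    obtain ⟨h1, hu2, hv2, hmod⟩ := h
    have hum : u.1 ≤ m := by omega
    have ht3 : 1 ≤ (t-3)^u.1 := Nat.one_le_pow _ _ (by omega)
    have hsplit := pow_split t m u.1 hum
    have h2s : 2 * (t - 3) ^ (m - u.1) ≤ t * (t - 3) ^ m := by
      rw [hsplit]
      exact Nat.mul_le_mul_right _ (by nlinarith)
    refine ⟨ht, hum, hvm, hu2, by rw [← h1]; exact hv2, Or.inl ⟨h1, ?_⟩⟩
    unfold tproj
    rw [← h1]
    rcases Nat.lt_or_ge (u.2 + 1) (t * (t - 3) ^ u.1) with hlt | hge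
    · have hv : v.2 = u.2 + 1 := by rw [← hmod]; exact Nat.mod_eq_of_lt hlt
      have e1 : v.2 * (t-3)^(m - u.1) = u.2 * (t-3)^(m - u.1) + (t-3)^(m - u.1) := by
        rw [hv]; ring
      have e2 : v.2 * (t-3)^(m - u.1) ≤ t * (t-3)^m := by
        rw [hsplit]
        exact Nat.mul_le_mul_right _ (by omega)
      unfold cycleDist; omega
    · have hu : u.2 + 1 = t * (t - 3) ^ u.1 := by omega
      have hv : v.2 = 0 := by
        rw [← hmod, ← hu]; simp
      have e1 : u.2 * (t-3)^(m - u.1) + (t-3)^(m-u.1) = t * (t-3)^m := by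
        rw [hsplit, ← hu]; ring
      unfold cycleDist
      rw [hv, zero_mul]
      omega
  · -- spoke edge
    obtain ⟨h1, hu2, hv2⟩ := h
    have hum : u.1 < m := by omega
    have hv2' : v.2 < t * (t - 3) ^ v.1 := by
      rw [h1, hv2, pow_succ]
      calc (t-3) * u.2 < (t-3) * (t * (t-3)^u.1) :=
            Nat.mul_lt_mul_of_pos_left hu2 (by omega)
        _ = t * ((t-3)^u.1 * (t-3)) := by ring
    have heq : tproj t m u = tproj t m v := by
      unfold tproj
      rw [hv2, h1]
      have h2 : m - u.1 = (m - (u.1+1)) + 1 := by omega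
      rw [h2, pow_succ]; ring
    exact ⟨ht, by omega, hvm, hu2, hv2', Or.inr ⟨Or.inr h1, heq⟩⟩

lemma tedge (t m : ℕ) (u v : ℕ × ℕ) (h : (Tgraph t m).Adj u v) :
    5 ≤ t ∧ u.1 ≤ m ∧ v.1 ≤ m ∧ u.2 < t * (t - 3) ^ u.1 ∧ v.2 < t * (t - 3) ^ v.1 ∧
      ((u.1 = v.1 ∧
          cycleDist (t * (t - 3) ^ m) (tproj t m u) (tproj t m v) ≤ (t - 3) ^ (m - u.1)) ∨
       ((u.1 = v.1 + 1 ∨ v.1 = u.1 + 1) ∧ tproj t m u = tproj t m v)) := by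
  obtain ⟨hne, h | h⟩ := h
  · exact tedge' t m u v h
  · obtain ⟨ht, h1, h2, h3, h4, h5 | h5⟩ := tedge' t m v u h
    · exact ⟨ht, h2, h1, h4, h3, Or.inl ⟨h5.1.symm, by
        rw [cycleDist_comm, ← h5.1]; exact h5.2⟩⟩
    · exact ⟨ht, h2, h1, h4, h3, Or.inr ⟨h5.1.symm, h5.2.symm⟩⟩

lemma tproj_lt (t m : ℕ) (ht : 5 ≤ t) (u : ℕ × ℕ) (h1 : u.1 ≤ m) (h2 : u.2 < t * (t - 3) ^ u.1) :
    tproj t m u < t * (t - 3) ^ m := by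
  unfold tproj
  rw [pow_split t m u.1 h1]
  exact Nat.mul_lt_mul_of_pos_right h2 (Nat.pow_pos (by omega))

lemma tpos (t m : ℕ) (ht : 5 ≤ t) : 0 < t - 3 := by omega

/-- Main walk induction. -/
lemma tmain (t m : ℕ) (ht : 5 ≤ t)
    (u v : ℕ × ℕ) (p : (Tgraph t m).Walk u v) :
    v.1 = m → v.2 < t * (t - 3) ^ m →
    u.1 ≤ m → u.2 < t * (t - 3) ^ u.1 →
    m - u.1 ≤ p.length ∧
      cycleDist (t * (t - 3) ^ m) (tproj t m u) v.2 ≤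
        (t - 2) ^ (p.length - (m - u.1)) * (t - 3) ^ (m - u.1) := by
  induction p with
  | @nil z =>
    intro hv1 _ _ _
    simp only [SimpleGraph.Walk.length_nil]
    refine ⟨by omega, ?_⟩
    have h1 : tproj t m z = z.2 := by unfold tproj; rw [hv1]; simp
    have h2 : cycleDist (t * (t-3)^m) z.2 z.2 = 0 := by unfold cycleDist; omega
    rw [h1, h2]
    exact Nat.zero_le _
  | @cons u w x h q ih =>
    intro hv1 hb hu1 hu2
    obtain ⟨_, hum, hwm, hu2', hw2, hcase⟩ := tedge t m u w h
    obtain ⟨hk, hD⟩ := ih hv1 hb hwm hw2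
    simp only [SimpleGraph.Walk.length_cons]
    have htp_u : tproj t m u < t * (t-3)^m := tproj_lt t m ht u hum hu2'
    have htp_w : tproj t m w < t * (t-3)^m := tproj_lt t m ht w hwm hw2
    generalize hLdef : q.length = L at hk hD
    generalize hkdef : m - w.1 = k at hk hD
    have h1pow : 1 ≤ (t-2)^(L-k) := Nat.one_le_pow _ _ (by omega)
    have hp3 : 1 ≤ (t-3)^k := Nat.one_le_pow _ _ (by omega)
    rcases hcase with ⟨heq, hstep⟩ | ⟨hlev, heq⟩
    · -- same level
      have hmk : m - u.1 = k := by omega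
      refine ⟨by omega, ?_⟩
      rw [hmk]
      have htri := cycleDist_triangle (t * (t-3)^m) (tproj t m u) (tproj t m w) x.2 htp_u htp_w hb
      have hexp : L + 1 - k = (L - k) + 1 := by omega
      rw [hexp, pow_succ]
      have e1 : (t-3)^k ≤ (t-2)^(L-k) * (t-3)^k := Nat.le_mul_of_pos_left _ (by omega)
      have e2 : 2 * ((t-2)^(L-k) * (t-3)^k) ≤ ((t-2)^(L-k) * (t-2)) * (t-3)^k := by
        have : 2 * ((t-2)^(L-k) * (t-3)^k) = (t-2)^(L-k) * 2 * (t-3)^k := by ring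
        rw [this]
        exact Nat.mul_le_mul_right _ (Nat.mul_le_mul_left _ (by omega))
      rw [hmk] at hstep
      omega
    · -- spoke
      have heqD : cycleDist (t * (t-3)^m) (tproj t m u) x.2 =
          cycleDist (t * (t-3)^m) (tproj t m w) x.2 := by rw [heq]
      rcases hlev with h1 | h1
      · -- walk goes up: u.1 = w.1 + 1
        have hk1 : 1 ≤ k := by omega
        obtain ⟨k', rfl⟩ : ∃ k', k = k' + 1 := ⟨k - 1, by omega⟩
        have hmk : m - u.1 = k' := by omega
        refine ⟨by omega, ?_⟩
        rw [hmk, heqD]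
        have hexp : L + 1 - k' = (L - (k' + 1)) + 2 := by omega
        rw [hexp]
        calc cycleDist (t * (t-3)^m) (tproj t m w) x.2
            ≤ (t-2)^(L-(k'+1)) * (t-3)^(k'+1) := hD
          _ = (t-2)^(L-(k'+1)) * ((t-3) * (t-3)^k') := by rw [pow_succ]; ring
          _ ≤ (t-2)^(L-(k'+1)) * (((t-2)*(t-2)) * (t-3)^k') := by
              apply Nat.mul_le_mul_left
              apply Nat.mul_le_mul_right
              calc t - 3 ≤ t - 2 := by omega
                _ ≤ (t-2)*(t-2) := Nat.le_mul_of_pos_left _ (by omega)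
          _ = (t-2)^(L-(k'+1)+2) * (t-3)^k' := by rw [pow_add]; ring
      · -- walk goes down: w.1 = u.1 + 1
        have hmk : m - u.1 = k + 1 := by omega
        refine ⟨by omega, ?_⟩
        rw [hmk, heqD]
        have hexp : L + 1 - (k + 1) = L - k := by omega
        rw [hexp]
        calc cycleDist (t * (t-3)^m) (tproj t m w) x.2
            ≤ (t-2)^(L-k) * (t-3)^k := hD
          _ ≤ (t-2)^(L-k) * (t-3)^(k+1) := by
              exact Nat.mul_le_mul_left _ (Nat.pow_le_pow_right (by omega) (by omega))

lemma tadj_succ (t m : ℕ) (ht : 5 ≤ t) (c : ℕ) (hc : c < t * (t - 3) ^ m) :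
    (Tgraph t m).Adj (m, c) (m, (c + 1) % (t * (t - 3) ^ m)) := by
  have hN : 2 ≤ t * (t - 3) ^ m := by
    have : 1 ≤ (t-3)^m := Nat.one_le_pow _ _ (by omega)
    nlinarith
  have hmod : (c + 1) % (t * (t - 3) ^ m) < t * (t - 3) ^ m := Nat.mod_lt _ (by omega)
  constructor
  · intro hcontra
    have h2 : (c + 1) % (t * (t - 3) ^ m) = c := (congrArg Prod.snd hcontra).symm
    rcases Nat.lt_or_ge (c + 1) (t * (t - 3) ^ m) with hlt | hge
    · rw [Nat.mod_eq_of_lt hlt] at h2; omega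
    · have : c + 1 = t * (t - 3) ^ m := by omega
      rw [this, Nat.mod_self] at h2; omega
  · exact Or.inl ⟨ht, le_rfl, Or.inl ⟨rfl, hc, hmod, rfl⟩⟩

lemma treach (t m : ℕ) (ht : 5 ≤ t) (a : ℕ) (ha : a < t * (t - 3) ^ m) (s : ℕ) :
    (Tgraph t m).Reachable (m, a) (m, (a + s) % (t * (t - 3) ^ m)) := by
  induction s with
  | zero => rw [Nat.add_zero, Nat.mod_eq_of_lt ha]
  | succ s ihs =>
    refine ihs.trans (SimpleGraph.Adj.reachable ?_)
    have h1 := tadj_succ t m ht ((a + s) % (t * (t - 3) ^ m))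
      (Nat.mod_lt _ (by
        have : 1 ≤ (t-3)^m := Nat.one_le_pow _ _ (by omega); nlinarith))
    have h2 : ((a + s) % (t * (t - 3) ^ m) + 1) % (t * (t - 3) ^ m)
        = (a + (s + 1)) % (t * (t - 3) ^ m) := by
      rw [Nat.mod_add_mod, Nat.add_assoc]
    rw [h2] at h1
    exact h1

theorem stmt_16 (t m d : ℕ) (ht : 5 ≤ t) (hd : 1 ≤ d)
    (a b : ℕ) (ha : a < t * (t - 3) ^ m) (hb : b < t * (t - 3) ^ m)
    (hdist : (Tgraph t m).dist (m, a) (m, b) ≤ d) :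
    cycleDist (t * (t - 3) ^ m) a b ≤ (t - 2) ^ d := by
  have hreach : (Tgraph t m).Reachable (m, a) (m, b) := by
    have h1 := treach t m ht a ha ((t * (t - 3) ^ m - a) + b)
    have h2 : (a + ((t * (t - 3) ^ m - a) + b)) % (t * (t - 3) ^ m) = b := by
      have : a + ((t * (t - 3) ^ m - a) + b) = b + 1 * (t * (t - 3) ^ m) := by omega
      rw [this, Nat.add_mul_mod_self_right, Nat.mod_eq_of_lt hb]
    rwa [h2] at h1
  obtain ⟨p, hp⟩ := hreach.exists_walk_length_eq_dist
  obtain ⟨_, hbound⟩ := tmain t m ht (m, a) (m, b) p rfl hb le_rfl ha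
  have hproj : tproj t m (m, a) = a := by unfold tproj; simp
  rw [hproj] at hbound
  simp only [Nat.sub_self, pow_zero, mul_one, Nat.sub_zero] at hbound
  calc cycleDist (t * (t - 3) ^ m) a b ≤ (t - 2) ^ p.length := hbound
    _ ≤ (t - 2) ^ d := Nat.pow_le_pow_right (by omega) (by omega)
end
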